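/- Let Z ≥ 0 be a bounded, not almost-surely-zero random variable and let p be a polynomial. Then lim_{n→∞} E[p(Z) Z^n] / E[Z^n] = p(‖Z‖_∞), where ‖Z‖_∞ is the essential supremum of Z. -/

import Mathlib

open MeasureTheory Filter

/-- For a bounded nonnegative random variable `Z` on a probability space,
not almost surely zero, and a polynomial `p`,
`E[p(Z) Z^n] / E[Z^n] → p(‖Z‖_∞)` as `n → ∞`, where `‖Z‖_∞ = essSup Z`. -/
theorem stmt_0 {Ω : Type*} [MeasurableSpace Ω] (μ : Measure Ω) [IsProbabilityMeasure μ]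
    (Z : Ω → ℝ) (hZm : Measurable Z) (M : ℝ)
    (hZ0 : ∀ᵐ ω ∂μ, 0 ≤ Z ω) (hZM : ∀ᵐ ω ∂μ, Z ω ≤ M)
    (hpos : 0 < μ {ω | 0 < Z ω}) (p : Polynomial ℝ) :
    Tendsto (fun n : ℕ => (∫ ω, p.eval (Z ω) * Z ω ^ n ∂μ) / ∫ ω, Z ω ^ n ∂μ)
      atTop (nhds (p.eval (essSup Z μ))) := by
  set c := essSup Z μ with hc
  have hbdd : IsBoundedUnder (· ≤ ·) (ae μ) Z := ⟨M, hZM⟩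
  have hZc : ∀ᵐ ω ∂μ, Z ω ≤ c := ae_le_essSup hbdd
  -- `c > 0`
  have hc0 : 0 < c := by
    by_contra h
    push_neg at h
    have hle0 : ∀ᵐ ω ∂μ, Z ω ≤ 0 := hZc.mono fun ω hω => hω.trans h
    have h0 : μ {ω | ¬ Z ω ≤ 0} = 0 := ae_iff.mp hle0
    simp only [not_le] at h0
    exact absurd h0 hpos.ne'
  -- positive mass above any level below `c`
  have key : ∀ b, b < c → 0 < μ {ω | b ≤ Z ω} := by
    intro b hb
    rcases eq_or_ne (μ {ω | b ≤ Z ω}) 0 with h0 | h0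
    · exfalso
      have hlt : ∀ᵐ ω ∂μ, Z ω < b := by
        rw [ae_iff]
        convert h0 using 2
        ext ω; simp [not_lt]
      have hcb : c ≤ b := by
        rw [hc]
        exact limsup_le_of_le (IsBoundedUnder.isCoboundedUnder_le ⟨0, hZ0⟩)
          (hlt.mono fun ω hω => hω.le)
      exact absurd hcb (not_le.mpr hb)
    · exact pos_iff_ne_zero.mpr h0
  -- integrability
  have hmeasPow : ∀ n : ℕ, Measurable fun ω => Z ω ^ n := fun n => hZm.pow_const n
  have intI : ∀ n : ℕ, Integrable (fun ω => Z ω ^ n) μ := by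
    intro n
    refine Integrable.mono' (integrable_const (c ^ n)) (hmeasPow n).aestronglyMeasurable ?_
    filter_upwards [hZ0, hZc] with ω h0 h1
    rw [Real.norm_eq_abs, abs_of_nonneg (pow_nonneg h0 n)]
    exact pow_le_pow_left₀ h0 h1 n
  have hpowNonneg : ∀ n : ℕ, 0 ≤ᵐ[μ] fun ω => Z ω ^ n := by
    intro n
    filter_upwards [hZ0] with ω h0
    exact pow_nonneg h0 n
  -- bound for `|p(x) - p(c)|` on `[0, c]`
  obtain ⟨B, hB⟩ : ∃ B, ∀ x ∈ Set.Icc (0:ℝ) c, ‖p.eval x - p.eval c‖ ≤ B :=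
    isCompact_Icc.exists_bound_of_continuousOn
      ((p.continuous.sub continuous_const).continuousOn)
  have hB0 : 0 ≤ B := le_trans (norm_nonneg _) (hB c ⟨hc0.le, le_refl c⟩)
  have hfm : ∀ n : ℕ, Measurable fun ω => (p.eval (Z ω) - p.eval c) * Z ω ^ n := fun n =>
    ((p.continuous.measurable.comp hZm).sub measurable_const).mul (hmeasPow n)
  have intf : ∀ n : ℕ, Integrable (fun ω => (p.eval (Z ω) - p.eval c) * Z ω ^ n) μ := by
    intro n
    refine Integrable.mono' (integrable_const (B * c ^ n)) (hfm n).aestronglyMeasurable ?_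
    filter_upwards [hZ0, hZc] with ω h0 h1
    rw [Real.norm_eq_abs, abs_mul, abs_of_nonneg (pow_nonneg h0 n)]
    exact mul_le_mul (hB _ ⟨h0, h1⟩) (pow_le_pow_left₀ h0 h1 n) (pow_nonneg h0 n) hB0
  -- the main estimate
  rw [Metric.tendsto_atTop]
  intro ε hε
  obtain ⟨δ, hδ0, hδ⟩ := Metric.continuousAt_iff.mp (p.continuous.continuousAt (x := c))
    (ε / 2) (by positivity)
  set d : ℝ := min (δ / 2) (c / 2) with hd
  have hd0 : 0 < d := lt_min (by positivity) (by positivity)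
  have hdδ : d < δ := lt_of_le_of_lt (min_le_left _ _) (by linarith)
  have hdc : d ≤ c / 2 := min_le_right _ _
  set a : ℝ := c - d with ha
  set b : ℝ := c - d / 2 with hb
  have ha0 : 0 < a := by simp only [ha]; linarith
  have hab : a < b := by simp only [ha, hb]; linarith
  have hbc : b < c := by simp only [hb]; linarith
  have hb0 : 0 < b := ha0.trans hab
  set m : ℝ := (μ {ω | b ≤ Z ω}).toReal with hm
  have hm0 : 0 < m := ENNReal.toReal_pos (key b hbc).ne' (measure_ne_top μ _)
  have hsetb : MeasurableSet {ω | b ≤ Z ω} := hZm measurableSet_Ici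
  -- lower bound on the denominator
  have hIlb : ∀ n : ℕ, b ^ n * m ≤ ∫ ω, Z ω ^ n ∂μ := by
    intro n
    calc b ^ n * m ≤ ∫ ω in {ω | b ≤ Z ω}, Z ω ^ n ∂μ :=
          setIntegral_ge_of_const_le_real hsetb (measure_ne_top μ _)
            (fun x hx => pow_le_pow_left₀ hb0.le hx n) ((intI n).integrableOn)
      _ ≤ ∫ ω, Z ω ^ n ∂μ := setIntegral_le_integral (intI n) (hpowNonneg n)
  have hIpos : ∀ n : ℕ, 0 < ∫ ω, Z ω ^ n ∂μ := fun n =>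
    lt_of_lt_of_le (by positivity) (hIlb n)
  -- the numerator estimate
  set s : Set Ω := {ω | Z ω < a} with hsdef
  have hs : MeasurableSet s := hZm measurableSet_Iio
  have hD : ∀ n : ℕ,
      |(∫ ω, p.eval (Z ω) * Z ω ^ n ∂μ) - p.eval c * ∫ ω, Z ω ^ n ∂μ|
        ≤ B * a ^ n + ε / 2 * (∫ ω, Z ω ^ n ∂μ) := by
    intro n
    have hrw : (∫ ω, p.eval (Z ω) * Z ω ^ n ∂μ) - p.eval c * ∫ ω, Z ω ^ n ∂μ
        = ∫ ω, (p.eval (Z ω) - p.eval c) * Z ω ^ n ∂μ := by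
      rw [← integral_const_mul, ← integral_sub]
      · simp only [sub_mul]
      · refine Integrable.mono' (integrable_const ((B + |p.eval c|) * c ^ n))
          ((p.continuous.measurable.comp hZm).mul (hmeasPow n)).aestronglyMeasurable ?_
        filter_upwards [hZ0, hZc] with ω h0 h1
        rw [Real.norm_eq_abs, abs_mul, abs_of_nonneg (pow_nonneg h0 n)]
        refine mul_le_mul ?_ (pow_le_pow_left₀ h0 h1 n) (pow_nonneg h0 n) (by positivity)
        have h2 := hB _ (⟨h0, h1⟩ : Z ω ∈ Set.Icc (0:ℝ) c)
        rw [Real.norm_eq_abs] at h2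
        calc |p.eval (Z ω)| = |(p.eval (Z ω) - p.eval c) + p.eval c| := by ring_nf
          _ ≤ |p.eval (Z ω) - p.eval c| + |p.eval c| := abs_add_le _ _
          _ ≤ B + |p.eval c| := by linarith
      · exact (intI n).const_mul _
    rw [hrw, ← integral_add_compl hs (intf n)]
    refine le_trans (abs_add_le _ _) (add_le_add ?_ ?_)
    · -- integral over `s = {Z < a}`
      have hnorm : ‖∫ ω in s, (p.eval (Z ω) - p.eval c) * Z ω ^ n ∂μ‖
          ≤ B * a ^ n * (μ s).toReal := by
        refine norm_setIntegral_le_of_norm_le_const_ae' (measure_lt_top μ s) ?_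
        filter_upwards [hZ0, hZc] with ω h0 h1 hmem
        rw [Real.norm_eq_abs, abs_mul, abs_of_nonneg (pow_nonneg h0 n)]
        exact mul_le_mul (hB _ ⟨h0, h1⟩) (pow_le_pow_left₀ h0 (le_of_lt hmem) n)
          (pow_nonneg h0 n) hB0
      rw [Real.norm_eq_abs] at hnorm
      have hμs1 : (μ s).toReal ≤ 1 := by
        have := prob_le_one (μ := μ) (s := s)
        simpa using ENNReal.toReal_mono (by norm_num) this
      calc |∫ ω in s, (p.eval (Z ω) - p.eval c) * Z ω ^ n ∂μ|
          ≤ B * a ^ n * (μ s).toReal := hnorm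
        _ ≤ B * a ^ n * 1 := by
            refine mul_le_mul_of_nonneg_left hμs1 (by positivity)
        _ = B * a ^ n := mul_one _
    · -- integral over `sᶜ = {a ≤ Z}`
      have step1 : ‖∫ ω in sᶜ, (p.eval (Z ω) - p.eval c) * Z ω ^ n ∂μ‖
          ≤ ∫ ω in sᶜ, ‖(p.eval (Z ω) - p.eval c) * Z ω ^ n‖ ∂μ :=
        norm_integral_le_integral_norm _
      have step2 : ∫ ω in sᶜ, ‖(p.eval (Z ω) - p.eval c) * Z ω ^ n‖ ∂μ
          ≤ ∫ ω in sᶜ, ε / 2 * Z ω ^ n ∂μ := by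
        refine integral_mono_ae ((intf n).norm.restrict) (((intI n).const_mul _).restrict) ?_
        filter_upwards [ae_restrict_of_ae hZ0, ae_restrict_of_ae hZc,
          ae_restrict_mem hs.compl] with ω h0 h1 hmem
        have haZ : a ≤ Z ω := not_lt.mp hmem
        have hdist : dist (Z ω) c < δ := by
          rw [Real.dist_eq, abs_of_nonpos (by linarith)]
          simp only [ha] at haZ
          linarith
        have hclose := hδ hdist
        rw [Real.dist_eq] at hclose
        rw [Real.norm_eq_abs, abs_mul, abs_of_nonneg (pow_nonneg h0 n)]
        exact mul_le_mul_of_nonneg_right hclose.le (pow_nonneg h0 n)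
      have step3 : ∫ ω in sᶜ, ε / 2 * Z ω ^ n ∂μ ≤ ε / 2 * ∫ ω, Z ω ^ n ∂μ := by
        rw [integral_const_mul]
        exact mul_le_mul_of_nonneg_left
          (setIntegral_le_integral (intI n) (hpowNonneg n)) (by positivity)
      calc |∫ ω in sᶜ, (p.eval (Z ω) - p.eval c) * Z ω ^ n ∂μ|
          ≤ ∫ ω in sᶜ, ‖(p.eval (Z ω) - p.eval c) * Z ω ^ n‖ ∂μ := step1
        _ ≤ ∫ ω in sᶜ, ε / 2 * Z ω ^ n ∂μ := step2
        _ ≤ ε / 2 * ∫ ω, Z ω ^ n ∂μ := step3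
  -- choose N from geometric decay
  have hratio : (0:ℝ) ≤ a / b := le_of_lt (div_pos ha0 hb0)
  have hratio1 : a / b < 1 := (div_lt_one hb0).mpr hab
  have hgeo : Tendsto (fun n : ℕ => B / m * (a / b) ^ n) atTop (nhds 0) := by
    have := tendsto_pow_atTop_nhds_zero_of_lt_one hratio hratio1
    simpa using this.const_mul (B / m)
  have hev : ∀ᶠ n : ℕ in atTop, B / m * (a / b) ^ n < ε / 2 :=
    hgeo.eventually (gt_mem_nhds (by positivity))
  obtain ⟨N, hN⟩ := eventually_atTop.mp hev
  refine ⟨N, fun n hn => ?_⟩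
  have hIn := hIpos n
  rw [Real.dist_eq]
  have hkey : (∫ ω, p.eval (Z ω) * Z ω ^ n ∂μ) / (∫ ω, Z ω ^ n ∂μ) - p.eval c
      = ((∫ ω, p.eval (Z ω) * Z ω ^ n ∂μ) - p.eval c * ∫ ω, Z ω ^ n ∂μ)
        / ∫ ω, Z ω ^ n ∂μ := by
    field_simp
  rw [hkey, abs_div, abs_of_pos hIn]
  have hBan : B * a ^ n / (∫ ω, Z ω ^ n ∂μ) ≤ B / m * (a / b) ^ n := by
    have h1 : B * a ^ n / (∫ ω, Z ω ^ n ∂μ) ≤ B * a ^ n / (b ^ n * m) := by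
      exact div_le_div_of_nonneg_left (by positivity) (by positivity) (hIlb n)
    have h2 : B / m * (a / b) ^ n = B * a ^ n / (b ^ n * m) := by
      rw [div_pow, div_mul_div_comm, mul_comm m (b ^ n)]
    linarith
  calc |(∫ ω, p.eval (Z ω) * Z ω ^ n ∂μ) - p.eval c * ∫ ω, Z ω ^ n ∂μ|
        / ∫ ω, Z ω ^ n ∂μ
      ≤ (B * a ^ n + ε / 2 * ∫ ω, Z ω ^ n ∂μ) / ∫ ω, Z ω ^ n ∂μ := by
        gcongr
        exact hD n
    _ = B * a ^ n / (∫ ω, Z ω ^ n ∂μ) + ε / 2 := by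
        rw [add_div, mul_div_cancel_right₀ _ hIn.ne']
    _ ≤ B / m * (a / b) ^ n + ε / 2 := by linarith
    _ < ε / 2 + ε / 2 := by linarith [hN n hn]
    _ = ε := by ring
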